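/- Let R = I − n^{−1}𝟙𝟙^T be the orthogonal projector onto the orthogonal complement of 𝟙 in ℝ^n. A symmetric n×n real matrix X satisfies RXR = 0 if and only if X = 𝟙x^T + x𝟙^T for some vector x ∈ ℝ^n. -/
import Mathlib


open Matrix

noncomputable section

/-- with `R = I − n⁻¹ 𝟙𝟙ᵀ` the orthogonal projector onto `𝟙^⊥`, a symmetric
matrix `X` satisfies `R X R = 0` if and only if `X = 𝟙xᵀ + x𝟙ᵀ` for some vector `x`. -/
theorem kernel_of_conjugation_by_R {n : ℕ}
    (X : Matrix (Fin n) (Fin n) ℝ) (hX : X.IsSymm)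
    (R : Matrix (Fin n) (Fin n) ℝ)
    (hR : R = 1 - (n : ℝ)⁻¹ • vecMulVec (fun _ => 1) (fun _ => 1)) :
    R * X * R = 0 ↔
      ∃ x : Fin n → ℝ, X = vecMulVec (fun _ => 1) x + vecMulVec x (fun _ => 1) := by
  rcases Nat.eq_zero_or_pos n with h0 | hn
  · subst h0
    constructor
    · intro _; exact ⟨0, Subsingleton.elim _ _⟩
    · intro _; exact Subsingleton.elim _ _
  have hn0 : (n : ℝ) ≠ 0 := Nat.cast_ne_zero.mpr hn.ne'
  have hrow : ∀ i : Fin n, ∑ k, R i k = 0 := by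
    intro i
    simp [hR, Matrix.sub_apply, Matrix.smul_apply, vecMulVec_apply, one_apply,
      Finset.sum_sub_distrib, Finset.sum_ite_eq, hn0]
  have hcol : ∀ j : Fin n, ∑ k, R k j = 0 := by
    intro j
    simp [hR, Matrix.sub_apply, Matrix.smul_apply, vecMulVec_apply, one_apply,
      Finset.sum_sub_distrib, Finset.sum_ite_eq', hn0]
  constructor
  · intro h
    set s : Fin n → ℝ := fun i => ∑ j, X i j with hs
    set c : ℝ := ∑ i, ∑ j, X i j with hc
    have hsym : ∀ i j, X j i = X i j := by
      intro i j
      have := congrFun (congrFun hX i) j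
      simpa using this
    have key : ∀ i j, X i j = (n : ℝ)⁻¹ * s i + (n : ℝ)⁻¹ * s j - (n : ℝ)⁻¹ * (n : ℝ)⁻¹ * c := by
      intro i j
      have h1 : (R * X * R) i j = 0 := by rw [h]; rfl
      have hXR : ∀ a b : Fin n, (X * R) a b =
          X a b - (n : ℝ)⁻¹ * s a := by
        intro a b
        simp [Matrix.mul_apply, hR, Matrix.sub_apply, Matrix.smul_apply, vecMulVec_apply,
          one_apply, mul_sub, Finset.sum_sub_distrib, Finset.sum_ite_eq', hs, mul_comm,
          Finset.mul_sum]
        rw [Finset.sum_mul]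
      have h2 : (R * X * R) i j = X i j - (n : ℝ)⁻¹ * s i - (n : ℝ)⁻¹ * s j
          + (n : ℝ)⁻¹ * ((n : ℝ)⁻¹ * c) := by
        rw [Matrix.mul_assoc, Matrix.mul_apply]
        have : ∀ k, R i k * (X * R) k j = R i k * (X k j - (n : ℝ)⁻¹ * s k) := by
          intro k; rw [hXR]
        rw [Finset.sum_congr rfl fun k _ => this k]
        simp only [hR, Matrix.sub_apply, Matrix.smul_apply, vecMulVec_apply, one_apply,
          sub_mul, mul_sub, smul_eq_mul, one_mul, mul_one]
        rw [Finset.sum_sub_distrib, Finset.sum_sub_distrib, Finset.sum_sub_distrib]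
        have e1 : ∑ k, (if i = k then (1:ℝ) else 0) * X k j = X i j := by
          simp [Finset.sum_ite_eq]
        have e2 : ∑ k, (if i = k then (1:ℝ) else 0) * ((n:ℝ)⁻¹ * s k) = (n:ℝ)⁻¹ * s i := by
          simp [Finset.sum_ite_eq]
        have e3 : ∑ k, (n:ℝ)⁻¹ * X k j = (n:ℝ)⁻¹ * s j := by
          rw [← Finset.mul_sum]
          have : ∑ k, X k j = s j := by
            rw [hs]; exact Finset.sum_congr rfl fun k _ => hsym j k
          simp [this]
        have e4 : ∑ k, (n:ℝ)⁻¹ * ((n:ℝ)⁻¹ * s k) = (n:ℝ)⁻¹ * ((n:ℝ)⁻¹ * c) := by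
          rw [← Finset.mul_sum, ← Finset.mul_sum]
        rw [e1, e2, e3, e4]
        ring
      rw [h1] at h2
      linarith [h2]
    refine ⟨fun i => (n : ℝ)⁻¹ * s i - (n : ℝ)⁻¹ * (n : ℝ)⁻¹ * c / 2, ?_⟩
    ext i j
    simp only [Matrix.add_apply, vecMulVec_apply]
    rw [key i j]
    ring
  · rintro ⟨x, hx⟩
    have hA : R * vecMulVec (fun _ => (1:ℝ)) x = 0 := by
      ext i j
      simp only [Matrix.mul_apply, vecMulVec_apply, Matrix.zero_apply, one_mul]
      rw [← Finset.sum_mul, hrow, zero_mul]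
    have hB : vecMulVec x (fun _ => (1:ℝ)) * R = 0 := by
      ext i j
      simp only [Matrix.mul_apply, vecMulVec_apply, Matrix.zero_apply, mul_one]
      rw [← Finset.mul_sum, hcol, mul_zero]
    rw [hx, Matrix.mul_add, Matrix.add_mul, hA, Matrix.mul_assoc, hB]
    simp
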